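/- arXiv:1809.01902 — 4 statements merged into one kernel-verified Lean document; each statement's English description precedes it below -/
import Mathlib

section
/- The improper integral ∫_{0}^{∞} (1 − λ·arctan(1/λ)) dλ converges and equals π/4. -/
open Real MeasureTheory

lemma my_arctan_le_self {x : ℝ} (hx : 0 ≤ x) : Real.arctan x ≤ x := by
  have hnn : 0 ≤ Real.arctan x := by
    rw [← Real.arctan_zero]
    exact Real.arctan_strictMono.monotone hx
  have h := Real.le_tan hnn (Real.arctan_lt_pi_div_two x)
  rwa [Real.tan_arctan] at h

lemma my_arctan_ge {x : ℝ} (hx : 0 ≤ x) : x - x ^ 3 / 3 ≤ Real.arctan x := by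
  set g : ℝ → ℝ := fun t => Real.arctan t + t ^ 3 / 3 - t with hg
  have hderiv : ∀ t : ℝ, HasDerivAt g (1 / (1 + t ^ 2) + t ^ 2 - 1) t := by
    intro t
    have h1 := (Real.hasDerivAt_arctan t).add ((hasDerivAt_pow 3 t).div_const 3)
    have h2 := h1.sub (hasDerivAt_id t)
    refine h2.congr_deriv ?_
    ring
  have hmono : Monotone g := by
    apply monotone_of_deriv_nonneg
    · exact fun t => (hderiv t).differentiableAt
    · intro t
      rw [(hderiv t).deriv]
      have h : (0:ℝ) < 1 + t ^ 2 := by positivity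
      rw [show (1:ℝ) / (1 + t ^ 2) + t ^ 2 - 1 = t ^ 4 / (1 + t ^ 2) from by field_simp; ring]
      positivity
  have h0 : g 0 ≤ g x := hmono hx
  simp only [hg, Real.arctan_zero] at h0
  nlinarith [h0]

/-- The improper integral `∫₀^∞ (1 − λ·arctan(1/λ)) dλ` converges and equals `π/4`. -/
theorem integral_one_sub_arctan :
    IntegrableOn (fun lam : ℝ => 1 - lam * Real.arctan (1 / lam)) (Set.Ioi 0) volume ∧
    ∫ lam in Set.Ioi (0:ℝ), (1 - lam * Real.arctan (1 / lam)) = π / 4 := by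
  set F : ℝ → ℝ := fun x => x / 2 + (x ^ 2 + 1) / 2 * Real.arctan x - (x ^ 2 + 1) * (π / 4)
    with hF
  -- derivative of F
  have hderiv : ∀ x ∈ Set.Ioi (0:ℝ), HasDerivAt F (1 - x * Real.arctan (1 / x)) x := by
    intro x hx
    have hx0 : (0:ℝ) < x := hx
    have h1 : HasDerivAt (fun x : ℝ => x / 2) (1 / 2) x := (hasDerivAt_id x).div_const 2
    have h2 : HasDerivAt (fun x : ℝ => (x ^ 2 + 1) / 2) x x := by
      have := ((hasDerivAt_pow 2 x).add_const 1).div_const 2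
      refine this.congr_deriv ?_; push_cast; ring
    have h3 : HasDerivAt (fun x : ℝ => (x ^ 2 + 1) / 2 * Real.arctan x)
        (x * Real.arctan x + (x ^ 2 + 1) / 2 * (1 / (1 + x ^ 2))) x :=
      h2.mul (Real.hasDerivAt_arctan x)
    have h4 : HasDerivAt (fun x : ℝ => (x ^ 2 + 1) * (π / 4)) (2 * x * (π / 4)) x := by
      have := ((hasDerivAt_pow 2 x).add_const 1).mul_const (π / 4)
      refine this.congr_deriv ?_; push_cast; ring
    have h5 := (h1.add h3).sub h4
    refine h5.congr_deriv ?_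
    have hinv : Real.arctan (1 / x) = π / 2 - Real.arctan x := by
      rw [one_div]; exact Real.arctan_inv_of_pos hx0
    have h6 : (1:ℝ) + x ^ 2 ≠ 0 := by positivity
    rw [hinv]
    field_simp
    ring
  -- nonnegativity of the integrand on Ioi 0
  have hpos : ∀ x ∈ Set.Ioi (0:ℝ), 0 ≤ 1 - x * Real.arctan (1 / x) := by
    intro x hx
    have hx0 : (0:ℝ) < x := hx
    have h := my_arctan_le_self (le_of_lt (one_div_pos.mpr hx0))
    have := mul_le_mul_of_nonneg_left h hx0.le
    rw [mul_one_div, div_self hx0.ne'] at this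
    linarith
  -- limit at infinity
  have hlim : Filter.Tendsto F Filter.atTop (nhds 0) := by
    have hb : ∀ x : ℝ, 1 ≤ x → |F x| ≤ 1 / x := by
      intro x hx1
      have hx0 : (0:ℝ) < x := lt_of_lt_of_le one_pos hx1
      have hinv : Real.arctan (1/x) = π / 2 - Real.arctan x := by
        rw [one_div]; exact Real.arctan_inv_of_pos hx0
      have hup : Real.arctan (1/x) ≤ 1 / x := my_arctan_le_self (by positivity)
      have hlo : 1/x - (1/x) ^ 3 / 3 ≤ Real.arctan (1/x) := my_arctan_ge (by positivity)
      rw [hinv] at hup hlo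
      rw [abs_le]
      constructor
      · -- -1/x ≤ F x
        have : (x ^ 2 + 1) / 2 * Real.arctan x ≥ (x ^ 2 + 1) / 2 * (π/2 - 1/x) := by
          apply mul_le_mul_of_nonneg_left (by linarith) (by positivity)
        simp only [hF]
        rw [ge_iff_le] at this
        have hfs : (x ^ 2 + 1) / 2 * (π/2 - 1/x) = (x^2+1)*(π/4) - (x^2+1)/(2*x) := by
          field_simp; ring
        rw [hfs] at this
        have hkey : (x^2+1)/(2*x) ≤ x/2 + 1/x := by
          rw [div_le_iff₀ (by positivity)]
          have : (x/2 + 1/x) * (2*x) = x^2 + 2 := by field_simp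
          rw [this]; linarith
        linarith
      · -- F x ≤ 1/x
        have : (x ^ 2 + 1) / 2 * Real.arctan x ≤ (x ^ 2 + 1) / 2 * (π/2 - (1/x - (1/x)^3/3)) := by
          apply mul_le_mul_of_nonneg_left (by linarith) (by positivity)
        simp only [hF]
        have hfs : (x ^ 2 + 1) / 2 * (π/2 - (1/x - (1/x)^3/3)) =
            (x^2+1)*(π/4) - (x^2+1)/(2*x) + (x^2+1)/(6*x^3) := by
          field_simp; ring
        rw [hfs] at this
        have hkey1 : x/2 ≤ (x^2+1)/(2*x) := by
          rw [le_div_iff₀ (by positivity)]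
          nlinarith
        have hkey2 : (x^2+1)/(6*x^3) ≤ 1/x := by
          rw [div_le_div_iff₀ (by positivity) (by positivity)]
          nlinarith
        linarith
    have h1 : Filter.Tendsto (fun x : ℝ => 1 / x) Filter.atTop (nhds (0:ℝ)) := by
      simpa only [one_div] using tendsto_inv_atTop_zero
    apply squeeze_zero_norm' _ h1
    filter_upwards [Filter.eventually_ge_atTop (1:ℝ)] with x hx
    exact hb x hx
  have hcont : ContinuousWithinAt F (Set.Ici 0) 0 := by
    apply Continuous.continuousWithinAt
    simp only [hF]
    continuity
  constructor
  · exact integrableOn_Ioi_deriv_of_nonneg hcont hderiv hpos hlim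
  · have := integral_Ioi_of_hasDerivAt_of_nonneg hcont hderiv hpos hlim
    rw [this]
    simp [hF, Real.arctan_zero]
end

section
/- The improper integral ∫_{0}^{∞} (1 − λ·arctan(1/λ))² dλ converges and equals (π/3)(1 − log 2). -/
open Real MeasureTheory intervalIntegral Set Filter Topology

lemma loc_sin_int : IntervalIntegrable (fun x => Real.log (Real.sin x)) volume 0 (π/2) := by
  rw [intervalIntegrable_iff_integrableOn_Ioc_of_le (by positivity : (0:ℝ) ≤ π/2)]
  have hmeas : AEStronglyMeasurable (fun x => Real.log (Real.sin x))
      (volume.restrict (Ioc (0:ℝ) (π/2))) :=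
    (Real.measurable_log.comp Real.continuous_sin.measurable).aestronglyMeasurable
  have hg : IntegrableOn (fun x : ℝ => π/2 + 2 * x ^ (-(1:ℝ)/2)) (Ioc (0:ℝ) (π/2)) volume := by
    apply Integrable.add (integrableOn_const measure_Ioc_lt_top.ne)
    have := (intervalIntegrable_iff_integrableOn_Ioc_of_le (by positivity : (0:ℝ) ≤ π/2)).mp
      (intervalIntegral.intervalIntegrable_rpow' (a := 0) (b := π/2) (r := -(1:ℝ)/2) (by norm_num))
    exact this.const_mul 2
  refine Integrable.mono hg hmeas ?_
  filter_upwards [ae_restrict_mem measurableSet_Ioc] with x hx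
  have hx0 : 0 < x := hx.1
  have hx2 : x ≤ π/2 := hx.2
  have hs0 : 0 < Real.sin x := Real.sin_pos_of_pos_of_lt_pi hx0 (lt_of_le_of_lt hx2 (by linarith [Real.pi_pos]))
  have hs1 : Real.sin x ≤ 1 := Real.sin_le_one x
  have hlow : 2/π * x ≤ Real.sin x := Real.mul_le_sin hx0.le hx2
  have hrp : (0:ℝ) < x ^ (-(1:ℝ)/2) := Real.rpow_pos_of_pos hx0 _
  have key : |Real.log (Real.sin x)| ≤ π/2 + 2 * x ^ (-(1:ℝ)/2) := by
    rw [abs_le]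
    constructor
    · have h1 : Real.log (2/π * x) ≤ Real.log (Real.sin x) :=
        Real.log_le_log (by positivity) hlow
      have h2 : Real.log (2/π * x) = Real.log (2/π) + Real.log x :=
        Real.log_mul (by positivity) hx0.ne'
      have h3 : -Real.log x ≤ 2 * x ^ (-(1:ℝ)/2) := by
        have : Real.log (x ^ (-(1:ℝ)/2)) ≤ x ^ (-(1:ℝ)/2) :=
          (Real.log_le_sub_one_of_pos hrp).trans (by linarith)
        rw [Real.log_rpow hx0] at this
        nlinarith
      have h4 : -Real.log (2/π) ≤ π/2 := by
        rw [← Real.log_inv]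
        have h5 : (2/π)⁻¹ = π/2 := by field_simp
        rw [h5]
        exact (Real.log_le_sub_one_of_pos (by positivity)).trans (by linarith)
      nlinarith [h1, h2]
    · have : Real.log (Real.sin x) ≤ 0 := Real.log_nonpos hs0.le hs1
      nlinarith [Real.pi_pos]
  calc ‖Real.log (Real.sin x)‖ = |Real.log (Real.sin x)| := Real.norm_eq_abs _
    _ ≤ π/2 + 2 * x ^ (-(1:ℝ)/2) := key
    _ ≤ ‖π/2 + 2 * x ^ (-(1:ℝ)/2)‖ := le_abs_self _




lemma cos_int : IntervalIntegrable (fun x => Real.log (Real.cos x)) volume 0 (π/2) := by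
  have h := (loc_sin_int.comp_sub_left (π/2)).symm
  simp only [sub_zero, sub_self] at h
  refine h.congr_ae (Filter.Eventually.of_forall fun x => ?_)
  show Real.log (Real.sin (π/2 - x)) = _
  rw [Real.sin_pi_div_two_sub]

lemma cos_eq_sin : (∫ x in (0:ℝ)..(π/2), Real.log (Real.cos x))
    = ∫ x in (0:ℝ)..(π/2), Real.log (Real.sin x) := by
  have := intervalIntegral.integral_comp_sub_left (a := 0) (b := π/2)
    (fun x => Real.log (Real.sin x)) (π/2)
  simp only [sub_zero, sub_self] at this
  rw [← this]
  congr 1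
  ext x
  rw [Real.sin_pi_div_two_sub]

lemma sin_int_pi : IntervalIntegrable (fun x => Real.log (Real.sin x)) volume (π/2) π := by
  have h := (loc_sin_int.comp_sub_left π).symm
  have e1 : π - 0 = π := by ring
  have e2 : π - π/2 = π/2 := by ring
  rw [e1, e2] at h
  refine h.congr_ae (Filter.Eventually.of_forall fun x => ?_)
  show Real.log (Real.sin (π - x)) = _
  rw [Real.sin_pi_sub]

lemma upper_eq : (∫ x in (π/2)..π, Real.log (Real.sin x))
    = ∫ x in (0:ℝ)..(π/2), Real.log (Real.sin x) := by
  have := intervalIntegral.integral_comp_sub_left (a := 0) (b := π/2)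
    (fun x => Real.log (Real.sin x)) π
  have e1 : π - 0 = π := by ring
  have e2 : π - π/2 = π/2 := by ring
  rw [e1, e2] at this
  rw [← this]
  congr 1
  ext x
  rw [Real.sin_pi_sub]

lemma integral_log_sin_pi : (∫ x in (0:ℝ)..π, Real.log (Real.sin x))
    = 2 * ∫ x in (0:ℝ)..(π/2), Real.log (Real.sin x) := by
  rw [← intervalIntegral.integral_add_adjacent_intervals (b := π/2) loc_sin_int sin_int_pi,
    upper_eq]
  ring

lemma double : (∫ x in (0:ℝ)..(π/2), Real.log (Real.sin (2*x)))
    = (1/2) * ∫ x in (0:ℝ)..π, Real.log (Real.sin x) := by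
  have := intervalIntegral.smul_integral_comp_mul_left (a := 0) (b := π/2)
    (fun x => Real.log (Real.sin x)) 2
  have e1 : (2:ℝ) * 0 = 0 := by ring
  have e2 : (2:ℝ) * (π/2) = π := by ring
  rw [e1, e2, smul_eq_mul] at this
  rw [← this]
  ring

lemma key_sum : (∫ x in (0:ℝ)..(π/2), Real.log (Real.sin x)) + (∫ x in (0:ℝ)..(π/2), Real.log (Real.cos x))
    = (∫ x in (0:ℝ)..(π/2), Real.log (Real.sin (2*x))) - (π/2) * Real.log 2 := by
  rw [← intervalIntegral.integral_add loc_sin_int cos_int]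
  have hsub : (∫ x in (0:ℝ)..(π/2), Real.log (Real.sin (2*x)))
      - (π/2) * Real.log 2
      = ∫ x in (0:ℝ)..(π/2), (Real.log (Real.sin (2*x)) - Real.log 2) := by
    rw [intervalIntegral.integral_sub]
    · congr 1
      rw [intervalIntegral.integral_const, smul_eq_mul]
      ring_nf
    · have := (loc_sin_int.trans sin_int_pi).comp_mul_left (c := 2)
      simpa using this
    · exact intervalIntegrable_const
  rw [hsub]
  apply intervalIntegral.integral_congr_ae
  have h0 : (volume : Measure ℝ) {π/2} = 0 := measure_singleton _
  filter_upwards [compl_mem_ae_iff.mpr h0] with x hx hmem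
  have hx' : x ≠ π/2 := by simpa using hx
  rw [Set.uIoc_of_le (by positivity : (0:ℝ) ≤ π/2)] at hmem
  have hx0 : 0 < x := hmem.1
  have hx2 : x < π/2 := lt_of_le_of_ne hmem.2 hx'
  have hs : 0 < Real.sin x := Real.sin_pos_of_pos_of_lt_pi hx0 (by linarith [Real.pi_pos])
  have hc : 0 < Real.cos x := Real.cos_pos_of_mem_Ioo ⟨by linarith [Real.pi_pos], hx2⟩
  rw [Real.sin_two_mul, ← Real.log_mul (by positivity) hc.ne',
    show (2:ℝ) * Real.sin x * Real.cos x = 2 * (Real.sin x * Real.cos x) by ring,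
    Real.log_mul two_ne_zero (by positivity), Real.log_mul hs.ne' hc.ne']
  ring

lemma integral_log_sin_eq : (∫ x in (0:ℝ)..(π/2), Real.log (Real.sin x)) = -(π/2) * Real.log 2 := by
  have h := key_sum
  rw [cos_eq_sin, double, integral_log_sin_pi] at h
  linarith

lemma integral_log_cos_eq : (∫ x in (0:ℝ)..(π/2), Real.log (Real.cos x)) = -(π/2) * Real.log 2 := by
  rw [cos_eq_sin, integral_log_sin_eq]


lemma arctan_bounds {y : ℝ} (hy : 0 ≤ y) :
    y - y^3/3 ≤ Real.arctan y ∧ Real.arctan y ≤ y := by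
  have harct : Real.arctan y = ∫ t in (0:ℝ)..y, (1 + t^2)⁻¹ := by
    rw [integral_inv_one_add_sq, Real.arctan_zero, sub_zero]
  have hid : y = ∫ t in (0:ℝ)..y, (1:ℝ) := by simp
  have hcube : y^3/3 = ∫ t in (0:ℝ)..y, t^2 := by
    rw [integral_pow]; norm_num
  have hc1 : IntervalIntegrable (fun t : ℝ => (1 + t^2)⁻¹) volume 0 y :=
    ((((continuous_const.add (continuous_pow 2)) : Continuous fun t : ℝ => 1 + t^2).inv₀ (fun t => (by positivity : (1:ℝ) + t^2 ≠ 0))).intervalIntegrable _ _)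
  have hc2 : IntervalIntegrable (fun t : ℝ => (1:ℝ) - t^2) volume 0 y :=
    ((continuous_const.sub (continuous_pow 2)).intervalIntegrable _ _)
  have hc3 : IntervalIntegrable (fun t : ℝ => (1:ℝ)) volume 0 y :=
    intervalIntegrable_const
  constructor
  · have h : (∫ t in (0:ℝ)..y, ((1:ℝ) - t^2)) ≤ ∫ t in (0:ℝ)..y, (1 + t^2)⁻¹ := by
      apply intervalIntegral.integral_mono_on hy hc2 hc1
      intro t ht
      have h1 : (0:ℝ) < 1 + t^2 := by positivity
      rw [inv_eq_one_div, le_div_iff₀ h1]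
      nlinarith [sq_nonneg (t^2)]
    rw [intervalIntegral.integral_sub hc3 ((continuous_pow 2).intervalIntegrable _ _)] at h
    rw [harct]
    calc y - y^3/3 = (∫ t in (0:ℝ)..y, (1:ℝ)) - ∫ t in (0:ℝ)..y, t^2 := by rw [← hid, ← hcube]
      _ ≤ _ := h
  · have h : (∫ t in (0:ℝ)..y, (1 + t^2)⁻¹) ≤ ∫ t in (0:ℝ)..y, (1:ℝ) := by
      apply intervalIntegral.integral_mono_on hy hc1 hc3
      intro t ht
      have h1 : (0:ℝ) < 1 + t^2 := by positivity
      rw [inv_eq_one_div, div_le_one h1]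
      nlinarith [sq_nonneg t]
    rw [harct]
    exact h.trans hid.ge


noncomputable def Fa (x : ℝ) : ℝ :=
  (2/3)*(x^2+1)*Real.arctan x + x/3 - (π/3)*x^2 + (π^2/12)*x^3 - (π/3)*x^3*Real.arctan x
  + (1/3)*x^3*(Real.arctan x)^2 + (1/3)*(Real.arctan x - π/2)*Real.log (1+x^2)
  + (2/3) * ∫ t in (0:ℝ)..(Real.arctan x), Real.log (Real.cos t)

lemma cos_pos_uIcc {a t : ℝ} (ha : a ∈ Ioo (-(π/2)) (π/2)) (ht : t ∈ uIcc 0 a) :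
    0 < Real.cos t := by
  apply Real.cos_pos_of_mem_Ioo
  rcases le_total 0 a with h | h
  · rw [uIcc_of_le h] at ht
    exact ⟨lt_of_lt_of_le (by linarith [Real.pi_pos]) ht.1, lt_of_le_of_lt ht.2 ha.2⟩
  · rw [uIcc_of_ge h] at ht
    exact ⟨lt_of_lt_of_le ha.1 ht.1, lt_of_le_of_lt ht.2 (by linarith [Real.pi_pos])⟩

lemma prim_hasDeriv {a : ℝ} (ha : a ∈ Ioo (-(π/2)) (π/2)) :
    HasDerivAt (fun y => ∫ t in (0:ℝ)..y, Real.log (Real.cos t)) (Real.log (Real.cos a)) a := by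
  apply intervalIntegral.integral_hasDerivAt_right
  · apply ContinuousOn.intervalIntegrable
    intro t ht
    exact (Real.continuousAt_log (cos_pos_uIcc ha ht).ne').comp
      Real.continuous_cos.continuousAt |>.continuousWithinAt
  · exact ((Real.measurable_log.comp Real.continuous_cos.measurable).stronglyMeasurable).stronglyMeasurableAtFilter
  · have hc : 0 < Real.cos a := Real.cos_pos_of_mem_Ioo ha
    exact (Real.continuousAt_log hc.ne').comp Real.continuous_cos.continuousAt

lemma Fa_hasDeriv (x : ℝ) :
    HasDerivAt Fa ((1 + x * Real.arctan x - π/2 * x)^2) x := by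
  have hA := Real.hasDerivAt_arctan x
  have hone : (0:ℝ) < 1 + x^2 := by positivity
  have hL : HasDerivAt (fun y : ℝ => Real.log (1 + y^2)) (2*x/(1+x^2)) x := by
    have h1 : HasDerivAt (fun y : ℝ => 1 + y^2) (2*x) x := by
      simpa using ((hasDerivAt_pow 2 x).const_add 1)
    simpa [div_eq_mul_inv] using (h1.log hone.ne')
  have hC : HasDerivAt (fun y => ∫ t in (0:ℝ)..(Real.arctan y), Real.log (Real.cos t))
      (Real.log (Real.cos (Real.arctan x)) * (1/(1+x^2))) x := by
    exact (prim_hasDeriv ⟨Real.neg_pi_div_two_lt_arctan x, Real.arctan_lt_pi_div_two x⟩).comp x hA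
  have hcosval : Real.log (Real.cos (Real.arctan x)) = -(1/2) * Real.log (1+x^2) := by
    rw [Real.cos_arctan, one_div, Real.log_inv, Real.log_sqrt hone.le]
    ring
  rw [hcosval] at hC
  have h1 : HasDerivAt (fun y : ℝ => (2/3)*(y^2+1)*Real.arctan y)
      ((2/3)*(2*x)*Real.arctan x + (2/3)*(x^2+1)*(1/(1+x^2))) x := by
    have hp : HasDerivAt (fun y : ℝ => (2/3)*(y^2+1)) ((2/3)*(2*x)) x := by
      have := ((hasDerivAt_pow 2 x).add_const 1).const_mul (2/3 : ℝ)
      simpa using this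
    exact hp.mul hA
  have h2 : HasDerivAt (fun y : ℝ => y/3 - (π/3)*y^2 + (π^2/12)*y^3)
      (1/3 - (π/3)*(2*x) + (π^2/12)*(3*x^2)) x := by
    have := (((hasDerivAt_id x).div_const 3).sub ((hasDerivAt_pow 2 x).const_mul (π/3))).add
      ((hasDerivAt_pow 3 x).const_mul (π^2/12))
    exact this.congr_deriv (by norm_num)
  have h3 : HasDerivAt (fun y : ℝ => -(π/3)*y^3*Real.arctan y)
      (-(π/3)*(3*x^2)*Real.arctan x + -(π/3)*x^3*(1/(1+x^2))) x := by
    have hp : HasDerivAt (fun y : ℝ => -(π/3)*y^3) (-(π/3)*(3*x^2)) x := by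
      have := (hasDerivAt_pow 3 x).const_mul (-(π/3) : ℝ)
      simpa using this
    exact hp.mul hA
  have h4 : HasDerivAt (fun y : ℝ => (1/3)*y^3*(Real.arctan y)^2)
      ((1/3)*(3*x^2)*(Real.arctan x)^2 + (1/3)*x^3*(2*Real.arctan x*(1/(1+x^2)))) x := by
    have hp : HasDerivAt (fun y : ℝ => (1/3)*y^3) ((1/3)*(3*x^2)) x := by
      have := (hasDerivAt_pow 3 x).const_mul ((1:ℝ)/3)
      simpa using this
    have hA2 : HasDerivAt (fun y : ℝ => (Real.arctan y)^2) (2*Real.arctan x*(1/(1+x^2))) x := by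
      have := (hasDerivAt_pow 2 (Real.arctan x)).comp x hA
      exact this.congr_deriv (by norm_num)
    exact hp.mul hA2
  have h5 : HasDerivAt (fun y : ℝ => (1/3)*(Real.arctan y - π/2)*Real.log (1+y^2))
      ((1/3)*(1/(1+x^2))*Real.log (1+x^2) + (1/3)*(Real.arctan x - π/2)*(2*x/(1+x^2))) x := by
    have hp : HasDerivAt (fun y : ℝ => (1/3)*(Real.arctan y - π/2)) ((1/3)*(1/(1+x^2))) x :=
      (hA.sub_const (π/2)).const_mul (1/3 : ℝ)
    exact hp.mul hL
  have h6 : HasDerivAt (fun y : ℝ => (2/3) * ∫ t in (0:ℝ)..(Real.arctan y), Real.log (Real.cos t))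
      ((2/3) * (-(1/2) * Real.log (1+x^2) * (1/(1+x^2)))) x := hC.const_mul _
  have := ((((h1.add h2).add h3).add h4).add h5).add h6
  have heq := this.congr_of_eventuallyEq
    (Filter.Eventually.of_forall (fun y => by unfold Fa; simp only [Pi.add_apply]; ring) : Fa =ᶠ[nhds x] _)
  refine heq.congr_deriv ?_
  field_simp
  ring



-- T1
lemma T1 : Tendsto (fun x : ℝ => Real.arctan x⁻¹) atTop (𝓝 0) := by
  have : Tendsto (fun x : ℝ => x⁻¹) atTop (𝓝 0) := tendsto_inv_atTop_zero
  have h := (Real.continuous_arctan.continuousAt (x := 0)).tendsto.comp this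
  simpa [Function.comp_def] using h

-- T2
lemma T2 : Tendsto (fun x : ℝ => (x/3) * (1 - x * Real.arctan x⁻¹)^2) atTop (𝓝 0) := by
  have hb : Tendsto (fun x : ℝ => (1/27) * (x⁻¹)^3) atTop (𝓝 0) := by
    have := (tendsto_inv_atTop_zero (𝕜 := ℝ)).pow 3
    simpa using this.const_mul (1/27 : ℝ)
  apply tendsto_of_tendsto_of_tendsto_of_le_of_le' tendsto_const_nhds hb
  · filter_upwards [eventually_gt_atTop (0:ℝ)] with x hx
    positivity
  · filter_upwards [eventually_gt_atTop (0:ℝ)] with x hx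
    have hinv : 0 < x⁻¹ := by positivity
    obtain ⟨hlo, hhi⟩ := arctan_bounds hinv.le
    have h1 : 1 - x * Real.arctan x⁻¹ ≤ 1/(3*x^2) := by
      have : x * (x⁻¹ - (x⁻¹)^3/3) ≤ x * Real.arctan x⁻¹ :=
        mul_le_mul_of_nonneg_left hlo hx.le
      have hx' : x ≠ 0 := hx.ne'
      have e : x * (x⁻¹ - (x⁻¹)^3/3) = 1 - 1/(3*x^2) := by field_simp
      linarith [e ▸ this]
    have h0 : 0 ≤ 1 - x * Real.arctan x⁻¹ := by
      have : x * Real.arctan x⁻¹ ≤ x * x⁻¹ := mul_le_mul_of_nonneg_left hhi hx.le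
      rw [mul_inv_cancel₀ hx.ne'] at this
      linarith
    have hsq : (1 - x * Real.arctan x⁻¹)^2 ≤ (1/(3*x^2))^2 := by
      apply pow_le_pow_left₀ h0 h1
    calc (x/3) * (1 - x * Real.arctan x⁻¹)^2 ≤ (x/3) * (1/(3*x^2))^2 := by
          apply mul_le_mul_of_nonneg_left hsq (by positivity)
      _ = (1/27) * (x⁻¹)^3 := by field_simp; ring

lemma arctan_nn {x : ℝ} (h : 0 ≤ x) : 0 ≤ Real.arctan x := by
  rw [← Real.arctan_zero]
  exact Real.arctan_strictMono.monotone h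

-- T3
lemma T3 : Tendsto (fun x : ℝ => Real.arctan x⁻¹ * Real.log (1 + x^2)) atTop (𝓝 0) := by
  have hb : Tendsto (fun x : ℝ => 2 * Real.log 2 * x⁻¹ + 2 * (Real.log x / x)) atTop (𝓝 0) := by
    have h1 := (tendsto_inv_atTop_zero (𝕜 := ℝ)).const_mul (2 * Real.log 2)
    have h2 := (Real.isLittleO_log_id_atTop.tendsto_div_nhds_zero).const_mul 2
    simpa using h1.add h2
  apply tendsto_of_tendsto_of_tendsto_of_le_of_le' tendsto_const_nhds hb
  · filter_upwards [eventually_ge_atTop (1:ℝ)] with x hx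
    have hinv : 0 ≤ x⁻¹ := by positivity
    have harc : 0 ≤ Real.arctan x⁻¹ := arctan_nn hinv
    have hlog : 0 ≤ Real.log (1 + x^2) := Real.log_nonneg (by nlinarith)
    positivity
  · filter_upwards [eventually_ge_atTop (1:ℝ)] with x hx
    have hx0 : (0:ℝ) < x := by linarith
    have harc : Real.arctan x⁻¹ ≤ x⁻¹ := (arctan_bounds (by positivity)).2
    have harc0 : 0 ≤ Real.arctan x⁻¹ := arctan_nn (by positivity)
    have hlog0 : 0 ≤ Real.log (1 + x^2) := Real.log_nonneg (by nlinarith)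
    have hlogle : Real.log (1 + x^2) ≤ 2 * Real.log 2 + 2 * Real.log x := by
      have h1 : 1 + x^2 ≤ (2*x)^2 := by nlinarith
      have h2 : Real.log (1 + x^2) ≤ Real.log ((2*x)^2) :=
        Real.log_le_log (by positivity) h1
      rw [Real.log_pow, Real.log_mul two_ne_zero hx0.ne'] at h2
      push_cast at h2
      linarith
    calc Real.arctan x⁻¹ * Real.log (1 + x^2) ≤ x⁻¹ * Real.log (1 + x^2) :=
          mul_le_mul_of_nonneg_right harc hlog0
      _ ≤ x⁻¹ * (2 * Real.log 2 + 2 * Real.log x) :=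
          mul_le_mul_of_nonneg_left hlogle (by positivity)
      _ = 2 * Real.log 2 * x⁻¹ + 2 * (Real.log x / x) := by field_simp

-- T4
lemma T4 : Tendsto (fun x : ℝ => ∫ t in (0:ℝ)..(Real.arctan x), Real.log (Real.cos t)) atTop
    (𝓝 (-(π/2) * Real.log 2)) := by
  have hint : IntegrableOn (fun t => Real.log (Real.cos t)) (uIcc (0:ℝ) (π/2)) volume :=
    (intervalIntegrable_iff').mp cos_int
  have hcont : ContinuousOn (fun y => ∫ t in (0:ℝ)..y, Real.log (Real.cos t)) (uIcc (0:ℝ) (π/2)) :=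
    intervalIntegral.continuousOn_primitive_interval hint
  have hmem : (π/2) ∈ uIcc (0:ℝ) (π/2) := right_mem_uIcc
  have hcwa := (hcont (π/2) hmem)
  have harct : Tendsto Real.arctan atTop (𝓝[uIcc (0:ℝ) (π/2)] (π/2)) := by
    apply tendsto_nhdsWithin_of_tendsto_nhds_of_eventually_within
    · exact Real.tendsto_arctan_atTop.mono_right nhdsWithin_le_nhds
    · filter_upwards [eventually_ge_atTop (0:ℝ)] with x hx
      rw [uIcc_of_le (by positivity : (0:ℝ) ≤ π/2)]
      exact ⟨arctan_nn hx, (Real.arctan_lt_pi_div_two x).le⟩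
  have := hcwa.tendsto.comp harct
  rw [integral_log_cos_eq] at this
  exact this

lemma Fa_tendsto : Tendsto Fa atTop (𝓝 ((π/3) * (1 - Real.log 2))) := by
  have hG : Tendsto (fun x : ℝ => π/3 - (2/3) * Real.arctan x⁻¹
      + (x/3)*(1 - x*Real.arctan x⁻¹)^2 - (1/3)*(Real.arctan x⁻¹ * Real.log (1+x^2))
      + (2/3) * ∫ t in (0:ℝ)..(Real.arctan x), Real.log (Real.cos t)) atTop
      (𝓝 (π/3 - (2/3)*0 + 0 - (1/3)*0 + (2/3)*(-(π/2) * Real.log 2))) := by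
    exact ((((tendsto_const_nhds.sub (T1.const_mul (2/3))).add T2).sub
      (T3.const_mul (1/3))).add (T4.const_mul (2/3)))
  have hval : π/3 - (2/3)*(0:ℝ) + 0 - (1/3)*0 + (2/3)*(-(π/2) * Real.log 2)
      = (π/3) * (1 - Real.log 2) := by ring
  rw [hval] at hG
  apply hG.congr'
  filter_upwards [eventually_gt_atTop (0:ℝ)] with x hx
  have hsub : Real.arctan x = π/2 - Real.arctan x⁻¹ := by
    rw [Real.arctan_inv_of_pos hx]; ring
  unfold Fa
  set I := ∫ t in (0:ℝ)..(Real.arctan x), Real.log (Real.cos t) with hI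
  rw [hsub]
  ring

lemma Fa_zero : Fa 0 = 0 := by
  unfold Fa
  simp

/-- The improper integral `∫₀^∞ (1 − λ·arctan(1/λ))² dλ` converges and equals
`(π/3)(1 − log 2)`. -/
theorem integral_one_sub_arctan_sq :
    IntegrableOn (fun lam : ℝ => (1 - lam * Real.arctan (1 / lam)) ^ 2) (Set.Ioi 0) volume ∧
    ∫ lam in Set.Ioi (0:ℝ), (1 - lam * Real.arctan (1 / lam)) ^ 2
      = (π / 3) * (1 - Real.log 2) := by
  have hderiv : ∀ x ∈ Ici (0:ℝ),
      HasDerivAt Fa ((fun x => (1 + x * Real.arctan x - π/2 * x)^2) x) x :=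
    fun x _ => Fa_hasDeriv x
  have hpos : ∀ x ∈ Ioi (0:ℝ), 0 ≤ (fun x => (1 + x * Real.arctan x - π/2 * x)^2) x :=
    fun x _ => sq_nonneg _
  have hint := integrableOn_Ioi_deriv_of_nonneg' hderiv hpos Fa_tendsto
  have hval := integral_Ioi_of_hasDerivAt_of_nonneg' hderiv hpos Fa_tendsto
  have heq : EqOn (fun x => (1 + x * Real.arctan x - π/2 * x)^2)
      (fun lam : ℝ => (1 - lam * Real.arctan (1 / lam)) ^ 2) (Ioi 0) := by
    intro lam hlam
    have hlam' : (0:ℝ) < lam := hlam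
    simp only [one_div, Real.arctan_inv_of_pos hlam']
    ring
  constructor
  · exact hint.congr_fun heq measurableSet_Ioi
  · rw [← setIntegral_congr_fun measurableSet_Ioi heq, hval, Fa_zero, sub_zero]
end

section
/- For every positive semidefinite Hermitian n×n matrix A, the matrix square root satisfies √A = (2/π) ∫_{0}^{∞} ( I − λ²·(A + λ²·I)⁻¹ ) dλ, where the integral converges entrywise as an improper Riemann integral. -/
open Matrix MeasureTheory
open Set
open scoped ComplexOrder

/-- The square root of a positive semidefinite matrix, as defined in the older Mathlib
(`Matrix.PosSemidef.sqrt`, since removed). -/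
noncomputable def Matrix.PosSemidef.sqrt {n 𝕜 : Type*} [Fintype n] [DecidableEq n] [RCLike 𝕜]
    {A : Matrix n n 𝕜} (hA : A.PosSemidef) : Matrix n n 𝕜 :=
  hA.1.eigenvectorUnitary.1 * diagonal ((↑) ∘ Real.sqrt ∘ hA.1.eigenvalues) *
  (star hA.1.eigenvectorUnitary : Matrix n n 𝕜)

lemma scalar_aux {μ : ℝ} (hμ : 0 ≤ μ) :
    IntegrableOn (fun l : ℝ => μ / (μ + l^2)) (Set.Ioi 0) volume ∧
    ∫ l in Set.Ioi (0:ℝ), μ / (μ + l^2) = Real.pi/2 * Real.sqrt μ := by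
  rcases eq_or_lt_of_le hμ with h0 | h0
  · simp [← h0]
  · set s := Real.sqrt μ with hs
    have hspos : 0 < s := Real.sqrt_pos.mpr h0
    have hs2 : s ^ 2 = μ := Real.sq_sqrt hμ
    have hderiv : ∀ x ∈ Ici (0:ℝ), HasDerivAt (fun l => s * Real.arctan (l / s))
        (μ / (μ + x^2)) x := by
      intro x _
      have h1 : HasDerivAt (fun l : ℝ => l / s) (1 / s) x := (hasDerivAt_id x).div_const s
      have h2 := (Real.hasDerivAt_arctan (x / s)).comp x h1
      have h3 := h2.const_mul s
      convert h3 using 1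
      have hμ0 : μ + x^2 ≠ 0 := by positivity
      have hs0 : s ≠ 0 := hspos.ne'
      case e'_9 =>
        rw [← hs2]
        field_simp
      all_goals rfl
    have hpos : ∀ x ∈ Ioi (0:ℝ), 0 ≤ μ / (μ + x^2) := fun x _ => by positivity
    have htend : Filter.Tendsto (fun l => s * Real.arctan (l / s)) Filter.atTop
        (nhds (s * (Real.pi / 2))) := by
      exact (tendsto_nhds_of_tendsto_nhdsWithin
        Real.tendsto_arctan_atTop |>.comp
        (Filter.tendsto_id.atTop_div_const hspos)).const_mul s
    have hint := integrableOn_Ioi_deriv_of_nonneg' hderiv hpos htend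
    refine ⟨hint, ?_⟩
    have := integral_Ioi_of_hasDerivAt_of_tendsto' hderiv hint htend
    rw [this]
    simp [Real.arctan_zero, mul_comm]

/-- Integral representation of the matrix square root: for every positive semidefinite
Hermitian matrix `A`, `√A = (2/π) ∫₀^∞ (I − λ²(A + λ²I)⁻¹) dλ`, where the improper
integral converges entrywise. -/
theorem sqrt_eq_integral {n : ℕ} (A : Matrix (Fin n) (Fin n) ℂ) (hA : A.PosSemidef) :
    ∀ i j : Fin n,
      IntegrableOn
        (fun lam : ℝ =>
          ((1 : Matrix (Fin n) (Fin n) ℂ)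
            - ((lam : ℂ) ^ 2) • (A + ((lam : ℂ) ^ 2) • (1 : Matrix (Fin n) (Fin n) ℂ))⁻¹) i j)
        (Set.Ioi 0) volume ∧
      hA.sqrt i j = (2 / Real.pi : ℂ) *
        ∫ lam in Set.Ioi (0:ℝ),
          ((1 : Matrix (Fin n) (Fin n) ℂ)
            - ((lam : ℂ) ^ 2) • (A + ((lam : ℂ) ^ 2) • (1 : Matrix (Fin n) (Fin n) ℂ))⁻¹) i j := by
  set U : Matrix (Fin n) (Fin n) ℂ := (hA.1.eigenvectorUnitary : Matrix (Fin n) (Fin n) ℂ) with hUdef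
  set μ : Fin n → ℝ := hA.1.eigenvalues with hμdef
  have hμ0 : ∀ k, 0 ≤ μ k := fun k => hA.eigenvalues_nonneg k
  have hU1 : U * star U = 1 := Matrix.mem_unitaryGroup_iff.mp hA.1.eigenvectorUnitary.2
  have hU2 : star U * U = 1 := Matrix.mem_unitaryGroup_iff'.mp hA.1.eigenvectorUnitary.2
  set T : (Fin n → ℂ) → Matrix (Fin n) (Fin n) ℂ :=
    fun d => U * Matrix.diagonal d * star U with hTdef
  have hT_mul : ∀ d e, T d * T e = T (fun k => d k * e k) := by
    intro d e
    show (U * Matrix.diagonal d * star U) * (U * Matrix.diagonal e * star U)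
        = U * Matrix.diagonal (fun k => d k * e k) * star U
    calc (U * Matrix.diagonal d * star U) * (U * Matrix.diagonal e * star U)
        = U * Matrix.diagonal d * (star U * (U * Matrix.diagonal e) * star U) := by
          rw [Matrix.mul_assoc (U * Matrix.diagonal d), Matrix.mul_assoc (star U)]
      _ = U * Matrix.diagonal d * (Matrix.diagonal e * star U) := by
          rw [← Matrix.mul_assoc (star U) U, hU2, one_mul]
      _ = U * (Matrix.diagonal d * Matrix.diagonal e) * star U := by
          simp only [Matrix.mul_assoc]
      _ = U * Matrix.diagonal (fun k => d k * e k) * star U := by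
          rw [Matrix.diagonal_mul_diagonal]
  have hT_one : T (fun _ => 1) = 1 := by
    show U * Matrix.diagonal (fun _ => (1:ℂ)) * star U = 1
    rw [show Matrix.diagonal (fun _ : Fin n => (1:ℂ)) = 1 from Matrix.diagonal_one,
      Matrix.mul_one, hU1]
  have hT_smul : ∀ (c : ℂ) d, c • T d = T (fun k => c * d k) := by
    intro c d
    show c • (U * Matrix.diagonal d * star U) = U * Matrix.diagonal (fun k => c * d k) * star U
    rw [show (fun k => c * d k) = c • d from rfl, Matrix.diagonal_smul,
      Matrix.mul_smul, Matrix.smul_mul]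
  have hT_smul_one : ∀ c : ℂ, c • (1 : Matrix (Fin n) (Fin n) ℂ) = T (fun _ => c) := by
    intro c
    rw [← hT_one, hT_smul]
    simp
  have hT_add : ∀ d e, T d + T e = T (fun k => d k + e k) := by
    intro d e
    show (U * Matrix.diagonal d * star U) + (U * Matrix.diagonal e * star U)
        = U * Matrix.diagonal (fun k => d k + e k) * star U
    rw [show Matrix.diagonal (fun k => d k + e k) = Matrix.diagonal d + Matrix.diagonal e from
      (Matrix.diagonal_add d e).symm, Matrix.mul_add, Matrix.add_mul]
  have hT_sub : ∀ d e, T d - T e = T (fun k => d k - e k) := by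
    intro d e
    show (U * Matrix.diagonal d * star U) - (U * Matrix.diagonal e * star U)
        = U * Matrix.diagonal (fun k => d k - e k) * star U
    rw [show Matrix.diagonal (fun k => d k - e k) = Matrix.diagonal d - Matrix.diagonal e from
      (Matrix.diagonal_sub d e).symm, Matrix.mul_sub, Matrix.sub_mul]
  have hA_eq : A = T (fun k => (μ k : ℂ)) := hA.1.spectral_theorem
  have hsqrt_eq : hA.sqrt = T (fun k => ((Real.sqrt (μ k) : ℝ) : ℂ)) := rfl
  have hT_apply : ∀ (d : Fin n → ℂ) (i j : Fin n),
      T d i j = ∑ k, U i k * (starRingEnd ℂ) (U j k) * d k := by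
    intro d i j
    show (U * Matrix.diagonal d * star U) i j = _
    rw [Matrix.mul_apply]
    refine Finset.sum_congr rfl fun k _ => ?_
    rw [Matrix.mul_diagonal, Matrix.star_apply, Complex.star_def]
    ring
  have hkey : ∀ l : ℝ, l ∈ Ioi (0:ℝ) →
      ((1 : Matrix (Fin n) (Fin n) ℂ)
        - ((l : ℂ) ^ 2) • (A + ((l : ℂ) ^ 2) • (1 : Matrix (Fin n) (Fin n) ℂ))⁻¹)
      = T (fun k => ((μ k / (μ k + l^2) : ℝ) : ℂ)) := by
    intro l hl
    have hl' : (0:ℝ) < l := hl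
    have hlsq : (0:ℝ) < l^2 := by positivity
    have hneR : ∀ k, (μ k + l^2) ≠ 0 := fun k => by
      have := hμ0 k; linarith
    have hne : ∀ k, ((μ k : ℂ) + (l:ℂ)^2) ≠ 0 := by
      intro k
      rw [show ((μ k : ℂ) + (l:ℂ)^2) = ((μ k + l^2 : ℝ) : ℂ) by push_cast; ring]
      exact_mod_cast hneR k
    have h1 : A + ((l:ℂ)^2) • (1 : Matrix (Fin n) (Fin n) ℂ)
        = T (fun k => (μ k : ℂ) + (l:ℂ)^2) := by
      rw [hA_eq, hT_smul_one, hT_add]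
    have h2 : (A + ((l:ℂ)^2) • (1 : Matrix (Fin n) (Fin n) ℂ))⁻¹
        = T (fun k => ((μ k : ℂ) + (l:ℂ)^2)⁻¹) := by
      apply Matrix.inv_eq_right_inv
      rw [h1, hT_mul,
        show (fun k => ((μ k : ℂ) + (l:ℂ)^2) * ((μ k : ℂ) + (l:ℂ)^2)⁻¹)
          = (fun _ : Fin n => (1:ℂ)) from funext fun k => mul_inv_cancel₀ (hne k), hT_one]
    rw [h2, hT_smul, ← hT_one, hT_sub]
    refine congrArg T (funext fun k => ?_)
    have hk := hne k
    push_cast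
    field_simp
    ring
  intro i j
  set c : Fin n → ℂ := fun k => U i k * (starRingEnd ℂ) (U j k) with hc
  have heqon : EqOn
      (fun lam : ℝ =>
        ((1 : Matrix (Fin n) (Fin n) ℂ)
          - ((lam : ℂ) ^ 2) • (A + ((lam : ℂ) ^ 2) • (1 : Matrix (Fin n) (Fin n) ℂ))⁻¹) i j)
      (fun lam : ℝ => ∑ k, c k * ((μ k / (μ k + lam^2) : ℝ) : ℂ)) (Ioi 0) := by
    intro l hl
    simp only
    rw [hkey l hl, hT_apply]
  have htermint : ∀ k : Fin n, Integrable
      (fun lam : ℝ => c k * ((μ k / (μ k + lam^2) : ℝ) : ℂ)) (volume.restrict (Ioi 0)) :=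
    fun k => ((scalar_aux (hμ0 k)).1.ofReal).const_mul (c k)
  have hintg : IntegrableOn
      (fun lam : ℝ => ∑ k, c k * ((μ k / (μ k + lam^2) : ℝ) : ℂ)) (Ioi 0) volume :=
    integrable_finset_sum _ fun k _ => htermint k
  constructor
  · exact hintg.congr_fun heqon.symm measurableSet_Ioi
  · have hI : (∫ lam in Ioi (0:ℝ),
        ∑ k, c k * ((μ k / (μ k + lam^2) : ℝ) : ℂ))
        = ∑ k, c k * ((Real.pi/2 * Real.sqrt (μ k) : ℝ) : ℂ) := by
      rw [integral_finset_sum _ fun k _ => htermint k]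
      refine Finset.sum_congr rfl fun k _ => ?_
      rw [MeasureTheory.integral_const_mul]
      refine congrArg (fun z => c k * z) ?_
      calc (∫ a in Ioi (0:ℝ), ((μ k / (μ k + a^2) : ℝ) : ℂ))
          = (((∫ a in Ioi (0:ℝ), μ k / (μ k + a^2)) : ℝ) : ℂ) := integral_ofReal
        _ = _ := by rw [(scalar_aux (hμ0 k)).2]
    rw [setIntegral_congr_fun measurableSet_Ioi heqon, hI, hsqrt_eq, hT_apply, Finset.mul_sum]
    refine Finset.sum_congr rfl fun k _ => ?_
    have hπ : (Real.pi : ℂ) ≠ 0 := Complex.ofReal_ne_zero.mpr Real.pi_ne_zero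
    push_cast
    field_simp
    ring
end

section
/- Gauss counting with corridors: let k_F > 0, R > 0, and consider the spherical collar C := { x ∈ ℝ³ : k_F − R ≤ |x| ≤ k_F + R, |x̂·ê| ≤ N^{−δ} } for a fixed unit vector ê and parameters N ≥ 1, δ > 0 with k_F = κN^{1/3}, κ bounded. Then the number of lattice points of ℤ³ in C is at most C'·(N^{2/3−δ} + N^{1/3}) for a constant C' depending only on R and κ. -/
open MeasureTheory Real Set
open scoped RealInnerProductSpace ENNReal

noncomputable section
namespace CollarCount

lemma norm_symm {n : ℕ} (x : Fin n → ℝ) :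
    ‖(WithLp.equiv 2 (Fin n → ℝ)).symm x‖ = Real.sqrt (∑ i, x i ^ 2) := by
  rw [EuclideanSpace.norm_eq]
  simp [WithLp.equiv_symm_apply, Real.norm_eq_abs, sq_abs]

lemma inner_symm {n : ℕ} (x y : Fin n → ℝ) :
    ⟪(WithLp.equiv 2 (Fin n → ℝ)).symm x, (WithLp.equiv 2 (Fin n → ℝ)).symm y⟫
      = ∑ i, x i * y i := by
  simp [PiLp.inner_apply, WithLp.equiv_symm_apply, RCLike.inner_apply, conj_trivial, mul_comm]

lemma sqrt_sq_le (c d : ℝ) (hcd : c ≤ d) :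
    Real.sqrt d ^ 2 ≤ (d - c) + Real.sqrt c ^ 2 := by
  rcases le_or_gt 0 c with hc | hc
  · rw [Real.sq_sqrt hc, Real.sq_sqrt (hc.trans hcd)]; linarith
  · rw [Real.sqrt_eq_zero_of_nonpos hc.le]
    rcases le_or_gt 0 d with hd | hd
    · rw [Real.sq_sqrt hd]; nlinarith
    · rw [Real.sqrt_eq_zero_of_nonpos hd.le]; nlinarith

lemma area_annulus2 (c d : ℝ) (hcd : c ≤ d) :
    volume {y : Fin 2 → ℝ | c ≤ ∑ j, y j ^ 2 ∧ ∑ j, y j ^ 2 ≤ d} ≤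
      ENNReal.ofReal (π * (d - c)) := by
  have hA : MeasurableSet {y : Fin 2 → ℝ | c ≤ ∑ j, y j ^ 2 ∧ ∑ j, y j ^ 2 ≤ d} := by
    have hcont : Continuous fun y : Fin 2 → ℝ => ∑ j, y j ^ 2 :=
      continuous_finset_sum _ fun i _ => (continuous_apply i).pow 2
    exact ((isClosed_le continuous_const hcont).inter
      (isClosed_le hcont continuous_const)).measurableSet
  have hmp := EuclideanSpace.volume_preserving_symm_measurableEquiv_toLp (Fin 2)
  rw [← hmp.measure_preimage hA.nullMeasurableSet]
  have hpre : (MeasurableEquiv.toLp 2 (Fin 2 → ℝ)).symm ⁻¹'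
      {y : Fin 2 → ℝ | c ≤ ∑ j, y j ^ 2 ∧ ∑ j, y j ^ 2 ≤ d}
      = {z : EuclideanSpace ℝ (Fin 2) | c ≤ ‖z‖ ^ 2 ∧ ‖z‖ ^ 2 ≤ d} := by
    ext z
    have hz : ‖z‖ ^ 2 = ∑ j, z j ^ 2 := by
      rw [EuclideanSpace.norm_eq, Real.sq_sqrt (by positivity)]; simp [sq_abs]
    simp [MeasurableEquiv.toLp_symm_apply, hz]
  rw [hpre]
  have hsub : {z : EuclideanSpace ℝ (Fin 2) | c ≤ ‖z‖ ^ 2 ∧ ‖z‖ ^ 2 ≤ d} ⊆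
      Metric.closedBall 0 (Real.sqrt d) \ Metric.ball 0 (Real.sqrt c) := by
    intro z hz
    have h1 : ‖z‖ = Real.sqrt (‖z‖ ^ 2) := (Real.sqrt_sq (norm_nonneg z)).symm
    constructor
    · rw [Metric.mem_closedBall, dist_zero_right, h1]
      exact Real.sqrt_le_sqrt hz.2
    · rw [Metric.mem_ball, dist_zero_right, not_lt, h1]
      exact Real.sqrt_le_sqrt hz.1
  refine (measure_mono hsub).trans ?_
  have hbb : Metric.ball (0 : EuclideanSpace ℝ (Fin 2)) (Real.sqrt c) ⊆
      Metric.closedBall 0 (Real.sqrt d) :=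
    (Metric.ball_subset_ball (Real.sqrt_le_sqrt hcd)).trans Metric.ball_subset_closedBall
  rw [measure_diff hbb measurableSet_ball.nullMeasurableSet measure_ball_lt_top.ne]
  have hvol1 : volume (Metric.closedBall (0 : EuclideanSpace ℝ (Fin 2)) (Real.sqrt d))
      = ENNReal.ofReal (Real.sqrt d ^ 2 * π) := by
    rw [EuclideanSpace.volume_closedBall]
    simp only [Fintype.card_fin]
    rw [show ((2:ℕ):ℝ)/2 + 1 = 2 by norm_num, Real.Gamma_two, div_one,
      ← ENNReal.ofReal_pow (Real.sqrt_nonneg _), ← ENNReal.ofReal_mul (by positivity),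
      Real.sq_sqrt Real.pi_nonneg]
  have hvol2 : volume (Metric.ball (0 : EuclideanSpace ℝ (Fin 2)) (Real.sqrt c))
      = ENNReal.ofReal (Real.sqrt c ^ 2 * π) := by
    rw [EuclideanSpace.volume_ball]
    simp only [Fintype.card_fin]
    rw [show ((2:ℕ):ℝ)/2 + 1 = 2 by norm_num, Real.Gamma_two, div_one,
      ← ENNReal.ofReal_pow (Real.sqrt_nonneg _), ← ENNReal.ofReal_mul (by positivity),
      Real.sq_sqrt Real.pi_nonneg]
  rw [hvol1, hvol2, tsub_le_iff_right,
    ← ENNReal.ofReal_add (mul_nonneg Real.pi_nonneg (by linarith)) (by positivity)]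
  refine ENNReal.ofReal_le_ofReal ?_
  have h1 := sqrt_sq_le c d hcd
  have h2 := mul_le_mul_of_nonneg_left h1 Real.pi_nonneg
  linarith

def cube (v : Fin 3 → ℤ) : Set (Fin 3 → ℝ) :=
  Set.univ.pi fun i => Set.Ico (v i : ℝ) ((v i : ℝ) + 1)

lemma cube_measurable (v : Fin 3 → ℤ) : MeasurableSet (cube v) :=
  MeasurableSet.univ_pi fun _ => measurableSet_Ico

lemma cube_volume (v : Fin 3 → ℤ) : volume (cube v) = 1 := by
  rw [cube, volume_pi_pi]
  simp

lemma cube_disjoint {v w : Fin 3 → ℤ} (hvw : v ≠ w) : Disjoint (cube v) (cube w) := by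
  rw [Set.disjoint_left]
  intro x hxv hxw
  apply hvw
  funext i
  have h1 := hxv i (mem_univ i)
  have h2 := hxw i (mem_univ i)
  simp only [mem_Ico] at h1 h2
  have e1 : ((v i : ℝ)) < ((w i : ℤ) : ℝ) + 1 := lt_of_le_of_lt h1.1 h2.2
  have e2 : ((w i : ℝ)) < ((v i : ℤ) : ℝ) + 1 := lt_of_le_of_lt h2.1 h1.2
  have e1' : v i < w i + 1 := by exact_mod_cast (by push_cast at e1 ⊢; linarith : ((v i:ℝ)) < ((w i + 1 : ℤ) : ℝ))
  have e2' : w i < v i + 1 := by exact_mod_cast (by push_cast at e2 ⊢; linarith : ((w i:ℝ)) < ((v i + 1 : ℤ) : ℝ))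
  omega

lemma card_le_volume (S : Set (Fin 3 → ℤ)) (hS : S.Finite) (A : Set (Fin 3 → ℝ))
    (h : ∀ v ∈ S, cube v ⊆ A) :
    (S.ncard : ℝ≥0∞) ≤ volume A := by
  classical
  have hsub : (⋃ v ∈ hS.toFinset, cube v) ⊆ A :=
    Set.iUnion₂_subset fun v hv => h v (by simpa using hv)
  have hdisj : (hS.toFinset : Set (Fin 3 → ℤ)).PairwiseDisjoint cube := by
    intro v _ w _ hvw
    exact cube_disjoint hvw
  calc (S.ncard : ℝ≥0∞) = ∑ v ∈ hS.toFinset, volume (cube v) := by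
        simp [cube_volume, S.ncard_eq_toFinset_card hS]
    _ = volume (⋃ v ∈ hS.toFinset, cube v) :=
        (measure_biUnion_finset hdisj fun v _ => cube_measurable v).symm
    _ ≤ volume A := measure_mono hsub

lemma vol_collar (a b T : ℝ) (ha : 0 ≤ a) (hab : a ≤ b) (e : Fin 3 → ℝ)
    (he : ∑ i, e i ^ 2 = 1) :
    volume {x : Fin 3 → ℝ | a ^ 2 ≤ ∑ i, x i ^ 2 ∧ ∑ i, x i ^ 2 ≤ b ^ 2 ∧
        |∑ i, x i * e i| ≤ T}
      ≤ ENNReal.ofReal (2 * T * (π * (b ^ 2 - a ^ 2))) := by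
  classical
  -- continuity facts
  have hcont1 : Continuous fun x : Fin 3 → ℝ => ∑ i, x i ^ 2 :=
    continuous_finset_sum _ fun i _ => (continuous_apply i).pow 2
  have hcont2 : Continuous fun x : Fin 3 → ℝ => ∑ i, x i * e i :=
    continuous_finset_sum _ fun i _ => (continuous_apply i).mul continuous_const
  have hmeas : ∀ (f g : (Fin 3 → ℝ) → ℝ), Continuous f → Continuous g →
      MeasurableSet {x : Fin 3 → ℝ | a ^ 2 ≤ f x ∧ f x ≤ b ^ 2 ∧ |g x| ≤ T} := by
    intro f g hf hg
    exact ((isClosed_le continuous_const hf).inter ((isClosed_le hf continuous_const).inter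
      (isClosed_le hg.abs continuous_const))).measurableSet
  -- step 1: move to Euclidean space
  set u : EuclideanSpace ℝ (Fin 3) := (WithLp.equiv 2 (Fin 3 → ℝ)).symm e with hu_def
  have hu : ‖u‖ = 1 := by rw [hu_def, norm_symm, he, Real.sqrt_one]
  set E₀ : EuclideanSpace ℝ (Fin 3) := EuclideanSpace.single 0 (1:ℝ) with hE₀_def
  have hE₀ : ‖E₀‖ = 1 := by rw [hE₀_def, EuclideanSpace.norm_single, norm_one]
  have hnorm_sq : ∀ z : EuclideanSpace ℝ (Fin 3), ‖z‖ ^ 2 = ∑ i, z i ^ 2 := by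
    intro z
    rw [EuclideanSpace.norm_eq, Real.sq_sqrt (by positivity)]; simp [sq_abs]
  set Au := fun w : EuclideanSpace ℝ (Fin 3) =>
    {z : EuclideanSpace ℝ (Fin 3) | a ^ 2 ≤ ‖z‖ ^ 2 ∧ ‖z‖ ^ 2 ≤ b ^ 2 ∧ |⟪z, w⟫| ≤ T}
      with hAu_def
  have hAumeas : ∀ w, MeasurableSet (Au w) := by
    intro w
    have : Continuous fun z : EuclideanSpace ℝ (Fin 3) => ⟪z, w⟫ :=
      continuous_id.inner continuous_const
    exact ((isClosed_le continuous_const ((continuous_norm).pow 2)).inter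
      ((isClosed_le ((continuous_norm).pow 2) continuous_const).inter
      (isClosed_le this.abs continuous_const))).measurableSet
  have hmp3 := EuclideanSpace.volume_preserving_symm_measurableEquiv_toLp (Fin 3)
  have hstep1 : volume {x : Fin 3 → ℝ | a ^ 2 ≤ ∑ i, x i ^ 2 ∧ ∑ i, x i ^ 2 ≤ b ^ 2 ∧
      |∑ i, x i * e i| ≤ T} = volume (Au u) := by
    rw [← hmp3.measure_preimage (hmeas _ _ hcont1 hcont2).nullMeasurableSet]
    congr 1
    ext z
    have h1 : ∀ i, (MeasurableEquiv.toLp 2 (Fin 3 → ℝ)).symm z i = z i := fun i => rfl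
    have h2 : ⟪z, u⟫ = ∑ i, z i * e i := by
      rw [hu_def]
      simp [PiLp.inner_apply, WithLp.equiv_symm_apply, RCLike.inner_apply, conj_trivial, mul_comm]
    simp only [Set.mem_preimage, Set.mem_setOf_eq, hAu_def, h1, h2, hnorm_sq z]
  -- step 2: rotation
  have hstep2 : volume (Au u) = volume (Au E₀) := by
    set f := Submodule.reflection (ℝ ∙ (u - E₀))ᗮ with hf_def
    have hfu : f u = E₀ := Submodule.reflection_sub (by rw [hu, hE₀])
    have hpre : f ⁻¹' (Au E₀) = Au u := by
      ext z
      simp only [Set.mem_preimage, hAu_def, Set.mem_setOf_eq, f.norm_map]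
      rw [← hfu, f.inner_map_map]
    rw [← hpre]
    exact f.measurePreserving.measure_preimage (hAumeas E₀).nullMeasurableSet
  -- step 3: back to pi space with e₀
  have hcont2' : Continuous fun x : Fin 3 → ℝ => x 0 := continuous_apply 0
  have hstep3 : volume (Au E₀) = volume {x : Fin 3 → ℝ | a ^ 2 ≤ ∑ i, x i ^ 2 ∧
      ∑ i, x i ^ 2 ≤ b ^ 2 ∧ |x 0| ≤ T} := by
    rw [← hmp3.measure_preimage (hmeas _ _ hcont1 hcont2').nullMeasurableSet]
    congr 1
    ext z
    have h1 : ∀ i, (MeasurableEquiv.toLp 2 (Fin 3 → ℝ)).symm z i = z i := fun i => rfl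
    have h2 : ⟪z, E₀⟫ = z 0 := by
      rw [hE₀_def]
      simp [PiLp.inner_apply, EuclideanSpace.single_apply, RCLike.inner_apply, conj_trivial]
    simp only [Set.mem_preimage, Set.mem_setOf_eq, hAu_def, h1, h2, hnorm_sq z]
  rw [hstep1, hstep2, hstep3]
  -- step 4: Fubini
  set P : Set (ℝ × (Fin 2 → ℝ)) := {p | a ^ 2 ≤ p.1 ^ 2 + ∑ j, p.2 j ^ 2 ∧
      p.1 ^ 2 + ∑ j, p.2 j ^ 2 ≤ b ^ 2 ∧ |p.1| ≤ T} with hP_def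
  have hPmeas : MeasurableSet P := by
    have hc : Continuous fun p : ℝ × (Fin 2 → ℝ) => p.1 ^ 2 + ∑ j, p.2 j ^ 2 :=
      (continuous_fst.pow 2).add
        (continuous_finset_sum _ fun i _ => ((continuous_apply i).comp continuous_snd).pow 2)
    exact ((isClosed_le continuous_const hc).inter ((isClosed_le hc continuous_const).inter
      (isClosed_le continuous_fst.abs continuous_const))).measurableSet
  have hψ := volume_preserving_piFinSuccAbove (fun _ : Fin 3 => ℝ) 0
  have hstep4 : volume {x : Fin 3 → ℝ | a ^ 2 ≤ ∑ i, x i ^ 2 ∧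
      ∑ i, x i ^ 2 ≤ b ^ 2 ∧ |x 0| ≤ T} = volume P := by
    rw [← hψ.measure_preimage hPmeas.nullMeasurableSet]
    congr 1
  rw [hstep4, Measure.volume_eq_prod, Measure.prod_apply hPmeas]
  -- step 5: slice bound
  have hslice : ∀ s : ℝ, volume (Prod.mk s ⁻¹' P) ≤
      (Set.Icc (-T) T).indicator (fun _ => ENNReal.ofReal (π * (b ^ 2 - a ^ 2))) s := by
    intro s
    by_cases hs : |s| ≤ T
    · have hmem : s ∈ Set.Icc (-T) T := abs_le.mp hs
      have hind := Set.indicator_of_mem hmem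
        (fun _ : ℝ => ENNReal.ofReal (π * (b ^ 2 - a ^ 2)))
      rw [hind]
      have hsub : Prod.mk s ⁻¹' P ⊆
          {y : Fin 2 → ℝ | a ^ 2 - s ^ 2 ≤ ∑ j, y j ^ 2 ∧ ∑ j, y j ^ 2 ≤ b ^ 2 - s ^ 2} := by
        intro y hy
        simp only [Set.mem_preimage, hP_def, Set.mem_setOf_eq] at hy
        exact ⟨by linarith [hy.1], by linarith [hy.2.1]⟩
      refine (measure_mono hsub).trans ?_
      have := area_annulus2 (a ^ 2 - s ^ 2) (b ^ 2 - s ^ 2) (by nlinarith)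
      convert this using 2
      · rfl
      ring
    · have : Prod.mk s ⁻¹' P = ∅ := by
        ext y
        simp only [Set.mem_preimage, hP_def, Set.mem_setOf_eq, Set.mem_empty_iff_false,
          iff_false]
        intro hy
        exact hs hy.2.2
      rw [this]
      simp
  refine (lintegral_mono hslice).trans ?_
  rw [lintegral_indicator measurableSet_Icc, setLIntegral_const, Real.volume_Icc]
  rw [← ENNReal.ofReal_mul (mul_nonneg Real.pi_nonneg (by nlinarith))]
  exact ENNReal.ofReal_le_ofReal (le_of_eq (by ring))

end CollarCount
end

open CollarCount

set_option maxHeartbeats 1000000 in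

/-- Gauss counting with corridors: the number of points of `ℤ³` in the spherical collar
`{x : k_F − R ≤ |x| ≤ k_F + R, |x̂·ê| ≤ N^{−δ}}`, with `k_F = κN^{1/3}` and `κ ≤ κ₀`,
is at most `C'(N^{2/3−δ} + N^{1/3})` for a constant `C'` depending only on `R, κ₀`. -/
theorem collar_lattice_count (R κ₀ : ℝ) (hR : 0 < R) (hκ₀ : 0 < κ₀) :
    ∃ C' : ℝ, 0 < C' ∧
      ∀ N : ℝ, 1 ≤ N → ∀ κ : ℝ, 0 < κ → κ ≤ κ₀ → ∀ δ : ℝ, 0 < δ →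
      ∀ e : Fin 3 → ℝ, (∑ i, e i ^ 2) = 1 →
      (Set.ncard {v : Fin 3 → ℤ |
          κ * N ^ ((1:ℝ)/3) - R ≤ Real.sqrt (∑ i, ((v i : ℝ)) ^ 2) ∧
          Real.sqrt (∑ i, ((v i : ℝ)) ^ 2) ≤ κ * N ^ ((1:ℝ)/3) + R ∧
          |∑ i, (v i : ℝ) * e i| ≤ N ^ (-δ) * Real.sqrt (∑ i, ((v i : ℝ)) ^ 2)} : ℝ)
        ≤ C' * (N ^ ((2:ℝ)/3 - δ) + N ^ ((1:ℝ)/3)) := by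
  refine ⟨32 * (R + 2) * (κ₀ + R + 2) ^ 2, by positivity, ?_⟩
  intro N hN κ hκ hκκ₀ δ hδ e he
  have hN0 : (0:ℝ) < N := lt_of_lt_of_le one_pos hN
  set S := {v : Fin 3 → ℤ |
      κ * N ^ ((1:ℝ)/3) - R ≤ Real.sqrt (∑ i, ((v i : ℝ)) ^ 2) ∧
      Real.sqrt (∑ i, ((v i : ℝ)) ^ 2) ≤ κ * N ^ ((1:ℝ)/3) + R ∧
      |∑ i, (v i : ℝ) * e i| ≤ N ^ (-δ) * Real.sqrt (∑ i, ((v i : ℝ)) ^ 2)} with hS_def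
  have hrhs_pos : 0 < 32 * (R + 2) * (κ₀ + R + 2) ^ 2 *
      (N ^ ((2:ℝ)/3 - δ) + N ^ ((1:ℝ)/3)) := by
    have h1 : (0:ℝ) < N ^ ((2:ℝ)/3 - δ) := Real.rpow_pos_of_pos hN0 _
    have h2 : (0:ℝ) < N ^ ((1:ℝ)/3) := Real.rpow_pos_of_pos hN0 _
    positivity
  by_cases hS : S.Finite
  swap
  · rw [Set.Infinite.ncard hS]
    push_cast
    linarith
  -- notation
  set N3 : ℝ := N ^ ((1:ℝ)/3) with hN3_def
  set u : ℝ := N ^ (-δ) with hu_def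
  have hN3_one : 1 ≤ N3 := Real.one_le_rpow hN (by norm_num)
  have hN3_pos : 0 < N3 := lt_of_lt_of_le one_pos hN3_one
  have hu_pos : 0 < u := Real.rpow_pos_of_pos hN0 _
  have hu_le : u ≤ 1 := Real.rpow_le_one_of_one_le_of_nonpos hN (by linarith)
  have hs3 : Real.sqrt 3 ≤ 2 := by
    rw [show (2:ℝ) = Real.sqrt 4 by
      rw [show (4:ℝ) = 2 ^ 2 by norm_num, Real.sqrt_sq (by norm_num)]]
    exact Real.sqrt_le_sqrt (by norm_num)
  have hs3' : 0 ≤ Real.sqrt 3 := Real.sqrt_nonneg 3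
  set kF : ℝ := κ * N3 with hkF_def
  have hkF_pos : 0 < kF := mul_pos hκ hN3_pos
  set aa : ℝ := max (kF - R - Real.sqrt 3) 0 with haa_def
  set b : ℝ := kF + R + Real.sqrt 3 with hb_def
  set T : ℝ := u * (kF + R) + Real.sqrt 3 with hT_def
  have haa : 0 ≤ aa := le_max_right _ _
  have hb_pos : 0 < b := by positivity
  have hab : aa ≤ b := by
    apply max_le <;> [linarith; linarith]
  -- cubes are inside the collar region
  set A := {x : Fin 3 → ℝ | aa ^ 2 ≤ ∑ i, x i ^ 2 ∧ ∑ i, x i ^ 2 ≤ b ^ 2 ∧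
      |∑ i, x i * e i| ≤ T} with hA_def
  have hcube : ∀ v ∈ S, cube v ⊆ A := by
    intro v hv x hx
    set vr : Fin 3 → ℝ := fun i => (v i : ℝ) with hvr_def
    set X : EuclideanSpace ℝ (Fin 3) := (WithLp.equiv 2 (Fin 3 → ℝ)).symm x with hX_def
    set V : EuclideanSpace ℝ (Fin 3) := (WithLp.equiv 2 (Fin 3 → ℝ)).symm vr with hV_def
    set U : EuclideanSpace ℝ (Fin 3) := (WithLp.equiv 2 (Fin 3 → ℝ)).symm e with hU_def
    have hXnorm : ‖X‖ = Real.sqrt (∑ i, x i ^ 2) := norm_symm x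
    have hVnorm : ‖V‖ = Real.sqrt (∑ i, (vr i) ^ 2) := norm_symm vr
    have hUnorm : ‖U‖ = 1 := by rw [hU_def, norm_symm, he, Real.sqrt_one]
    have hXV : X - V = (WithLp.equiv 2 (Fin 3 → ℝ)).symm (x - vr) := by
      simp [hX_def, hV_def]
    have hdiff : ‖X - V‖ ≤ Real.sqrt 3 := by
      rw [hXV, norm_symm]
      apply Real.sqrt_le_sqrt
      have hterm : ∀ i, (x - vr) i ^ 2 ≤ 1 := by
        intro i
        have h1 := hx i (Set.mem_univ i)
        simp only [Set.mem_Ico] at h1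
        have h2 : (x - vr) i = x i - vr i := rfl
        rw [h2, hvr_def]
        nlinarith [h1.1, h1.2]
      calc ∑ i, (x - vr) i ^ 2 ≤ ∑ _i : Fin 3, (1:ℝ) := Finset.sum_le_sum fun i _ => hterm i
        _ = 3 := by simp
    obtain ⟨hv1, hv2, hv3⟩ := hv
    have hV1 : kF - R ≤ ‖V‖ := by rw [hVnorm]; exact hv1
    have hV2 : ‖V‖ ≤ kF + R := by rw [hVnorm]; exact hv2
    have hV3 : |⟪V, U⟫| ≤ u * ‖V‖ := by
      rw [hV_def, hU_def, inner_symm, hVnorm]; exact hv3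
    -- norm bounds for X
    have hlow : ‖V‖ - ‖X - V‖ ≤ ‖X‖ := by
      have := norm_sub_norm_le V X
      have h2 : ‖V - X‖ = ‖X - V‖ := norm_sub_rev V X
      linarith
    have hhigh : ‖X‖ ≤ ‖V‖ + ‖X - V‖ := by
      have := norm_add_le V (X - V)
      have h2 : V + (X - V) = X := by abel
      rw [h2] at this
      linarith
    have hXlow : aa ≤ ‖X‖ := by
      apply max_le
      · linarith
      · exact norm_nonneg X
    have hXhigh : ‖X‖ ≤ b := by rw [hb_def]; linarith
    have hXinner : |⟪X, U⟫| ≤ T := by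
      have hsplit : ⟪X, U⟫ = ⟪V, U⟫ + ⟪X - V, U⟫ := by
        rw [← inner_add_left]
        norm_num
      have h2 : |⟪X - V, U⟫| ≤ ‖X - V‖ * ‖U‖ := abs_real_inner_le_norm _ _
      rw [hUnorm, mul_one] at h2
      have h3 : |⟪X, U⟫| ≤ |⟪V, U⟫| + |⟪X - V, U⟫| := by
        rw [hsplit]; exact abs_add_le _ _
      have h4 : u * ‖V‖ ≤ u * (kF + R) := by
        apply mul_le_mul_of_nonneg_left hV2 hu_pos.le
      rw [hT_def]
      linarith
    -- translate to pi language
    have hsum_eq : ∑ i, x i ^ 2 = ‖X‖ ^ 2 := by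
      rw [hXnorm, Real.sq_sqrt (by positivity)]
    have hinner_eq : ∑ i, x i * e i = ⟪X, U⟫ := by
      rw [hX_def, hU_def, inner_symm]
    refine ⟨?_, ?_, ?_⟩
    · rw [hsum_eq]
      exact pow_le_pow_left₀ haa hXlow 2
    · rw [hsum_eq]
      exact pow_le_pow_left₀ (norm_nonneg X) hXhigh 2
    · rw [hinner_eq]
      exact hXinner
  -- measure chain
  have hchain : (S.ncard : ℝ≥0∞) ≤ ENNReal.ofReal (2 * T * (π * (b ^ 2 - aa ^ 2))) :=
    (card_le_volume S hS A hcube).trans (vol_collar aa b T haa hab e he)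
  have hBound_nonneg : (0:ℝ) ≤ 2 * T * (π * (b ^ 2 - aa ^ 2)) := by
    have h1 : 0 ≤ T := by positivity
    have h2 : aa ^ 2 ≤ b ^ 2 := pow_le_pow_left₀ haa hab 2
    exact mul_nonneg (by linarith) (mul_nonneg Real.pi_nonneg (by linarith))
  have hreal : (S.ncard : ℝ) ≤ 2 * T * (π * (b ^ 2 - aa ^ 2)) := by
    rw [← ENNReal.ofReal_natCast] at hchain
    exact (ENNReal.ofReal_le_ofReal_iff hBound_nonneg).mp hchain
  refine hreal.trans ?_
  -- final arithmetic
  have hbb : b ≤ (κ₀ + R + 2) * N3 := by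
    have h1 : kF ≤ κ₀ * N3 := by
      rw [hkF_def]; exact mul_le_mul_of_nonneg_right hκκ₀ hN3_pos.le
    have h2 : R + 2 ≤ (R + 2) * N3 := le_mul_of_one_le_right (by linarith) hN3_one
    have h3 : (κ₀ + R + 2) * N3 = κ₀ * N3 + (R + 2) * N3 := by ring
    linarith
  have hbaa : b - aa ≤ 2 * (R + 2) := by
    rcases le_or_gt (kF - R - Real.sqrt 3) 0 with h | h
    · rw [haa_def, max_eq_right h]
      rw [hb_def]
      linarith
    · rw [haa_def, max_eq_left h.le, hb_def]
      linarith
  have hD : b ^ 2 - aa ^ 2 ≤ 2 * (R + 2) * (2 * b) := by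
    have h1 : b ^ 2 - aa ^ 2 = (b - aa) * (b + aa) := by ring
    rw [h1]
    have h2 : b + aa ≤ 2 * b := by linarith
    have h3 : 0 ≤ b + aa := by linarith
    exact mul_le_mul hbaa h2 h3 (by linarith)
  have hTT : T ≤ κ₀ * (u * N3) + (R + 2) := by
    have h0 : u * R ≤ 1 * R := mul_le_mul_of_nonneg_right hu_le hR.le
    have h00 : u * (kF + R) = u * kF + u * R := by ring
    have h1 : u * (kF + R) ≤ u * kF + R := by linarith
    have h2 : u * kF = κ * (u * N3) := by rw [hkF_def]; ring
    have h3 : κ * (u * N3) ≤ κ₀ * (u * N3) := by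
      apply mul_le_mul_of_nonneg_right hκκ₀ (by positivity)
    rw [hT_def]
    linarith
  have hpow : u * N3 * N3 = N ^ ((2:ℝ)/3 - δ) := by
    rw [hu_def, hN3_def, ← Real.rpow_add hN0, ← Real.rpow_add hN0]
    congr 1
    ring
  have hπ : π ≤ 4 := by linarith [Real.pi_le_four]
  set Q : ℝ := R + 2 with hQ_def
  set K : ℝ := κ₀ + R + 2 with hK_def
  have hQ_pos : 0 < Q := by positivity
  have hK_pos : 0 < K := by positivity
  have hT_nonneg : (0:ℝ) ≤ T := by positivity
  have hD_nonneg : (0:ℝ) ≤ b ^ 2 - aa ^ 2 := by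
    nlinarith [pow_le_pow_left₀ haa hab 2]
  calc 2 * T * (π * (b ^ 2 - aa ^ 2))
      ≤ 2 * (κ₀ * (u * N3) + Q) * (4 * (2 * Q * (2 * (K * N3)))) := by
        have hD2 : b ^ 2 - aa ^ 2 ≤ 2 * Q * (2 * ((κ₀ + R + 2) * N3)) := by
          refine hD.trans ?_
          have h5 : 2 * b ≤ 2 * (K * N3) := by linarith
          exact mul_le_mul_of_nonneg_left h5 (by linarith)
        have hπD : π * (b ^ 2 - aa ^ 2) ≤ 4 * (2 * Q * (2 * (K * N3))) := by
          have h1 : π * (b ^ 2 - aa ^ 2) ≤ 4 * (b ^ 2 - aa ^ 2) :=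
            mul_le_mul_of_nonneg_right hπ hD_nonneg
          refine h1.trans ?_
          exact mul_le_mul_of_nonneg_left hD2 (by norm_num)
        have hr : 0 ≤ π * (b ^ 2 - aa ^ 2) := mul_nonneg Real.pi_nonneg hD_nonneg
        have h2T : 2 * T ≤ 2 * (κ₀ * (u * N3) + Q) := by linarith
        have hrr : (0:ℝ) ≤ 2 * (κ₀ * (u * N3) + Q) := by
          have := mul_nonneg hκ₀.le (mul_nonneg hu_pos.le hN3_pos.le)
          linarith
        exact mul_le_mul h2T hπD hr hrr
    _ = 32 * Q * K * (κ₀ * (u * N3 * N3) + Q * N3) := by rw [hK_def]; ring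
    _ ≤ 32 * Q * K * (K * (u * N3 * N3) + K * N3) := by
        have h1 : κ₀ ≤ K := by rw [hK_def]; linarith
        have h2 : Q ≤ K := by rw [hK_def, hQ_def]; linarith
        have h3 : (0:ℝ) ≤ u * N3 * N3 :=
          mul_nonneg (mul_nonneg hu_pos.le hN3_pos.le) hN3_pos.le
        have h4 : (0:ℝ) ≤ 32 * Q * K := by
          have := mul_nonneg hQ_pos.le hK_pos.le
          linarith
        exact mul_le_mul_of_nonneg_left (add_le_add
          (mul_le_mul_of_nonneg_right h1 h3)
          (mul_le_mul_of_nonneg_right h2 hN3_pos.le)) h4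
    _ = 32 * Q * K ^ 2 * (u * N3 * N3 + N3) := by ring
    _ = 32 * (R + 2) * (κ₀ + R + 2) ^ 2 * (N ^ ((2:ℝ)/3 - δ) + N ^ ((1:ℝ)/3)) := by
        rw [hpow, hQ_def, hK_def, hN3_def]
end
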